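/- A d×d unitary V satisfies VρV* ∈ ℳ_F for every free density matrix ρ ∈ ℳ_F if and only if V is a free unitary (i.e., V maps every free pure state to a free pure state). -/

import Mathlib

open Matrix Complex
open scoped ComplexOrder InnerProductSpace

noncomputable section

/-- Time-evolution unitary `U(t) = exp(-i t H)`. -/
def Uevol {d : ℕ} (H : Matrix (Fin d) (Fin d) ℂ) (t : ℝ) : Matrix (Fin d) (Fin d) ℂ :=
  NormedSpace.exp ((-(Complex.I * (t : ℂ))) • H)

/-- Revival fidelity `F_R(ψ) = |⟨ψ, U(2πT)ψ⟩|`. -/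
def FR {d : ℕ} (H : Matrix (Fin d) (Fin d) ℂ) (T : ℕ) (x : Fin d → ℂ) : ℝ :=
  ‖star x ⬝ᵥ (Uevol H (2 * Real.pi * T) *ᵥ x)‖

/-- A free pure state: a unit vector with perfect revival. -/
def IsFreeState {d : ℕ} (H : Matrix (Fin d) (Fin d) ℂ) (T : ℕ) (x : Fin d → ℂ) : Prop :=
  star x ⬝ᵥ x = 1 ∧ FR H T x = 1

/-- A free unitary: a unitary matrix mapping every free pure state to a free pure state. -/
def IsFreeUnitary {d : ℕ} (H : Matrix (Fin d) (Fin d) ℂ) (T : ℕ)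
    (V : Matrix (Fin d) (Fin d) ℂ) : Prop :=
  V ∈ Matrix.unitaryGroup (Fin d) ℂ ∧
    ∀ x : Fin d → ℂ, IsFreeState H T x → IsFreeState H T (V *ᵥ x)

open Classical in
/-- Positive semidefinite square root (junk value `0` off the PSD cone). -/
def psdSqrt {d : ℕ} (M : Matrix (Fin d) (Fin d) ℂ) : Matrix (Fin d) (Fin d) ℂ :=
  if h : M.PosSemidef then (h.1.eigenvectorUnitary : Matrix (Fin d) (Fin d) ℂ) *
    diagonal ((↑) ∘ Real.sqrt ∘ h.1.eigenvalues) *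
    (star h.1.eigenvectorUnitary : Matrix (Fin d) (Fin d) ℂ) else 0

/-- Mixed-state revival fidelity `F_{R,M}(ρ) = tr √(√ρ · U(2πT) ρ U(2πT)* · √ρ)`. -/
def FRM {d : ℕ} (H : Matrix (Fin d) (Fin d) ℂ) (T : ℕ) (ρ : Matrix (Fin d) (Fin d) ℂ) : ℂ :=
  (psdSqrt (psdSqrt ρ *
    (Uevol H (2 * Real.pi * T) * ρ * (Uevol H (2 * Real.pi * T))ᴴ) * psdSqrt ρ)).trace

/-- A free density matrix: a density matrix with mixed-state revival fidelity one. -/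
def IsFreeDM {d : ℕ} (H : Matrix (Fin d) (Fin d) ℂ) (T : ℕ)
    (ρ : Matrix (Fin d) (Fin d) ℂ) : Prop :=
  ρ.PosSemidef ∧ ρ.trace = 1 ∧ FRM H T ρ = 1

section AuxLemmas

open scoped MatrixOrder in
lemma psdSqrt_of_posSemidef {d : ℕ} {M : Matrix (Fin d) (Fin d) ℂ} (h : M.PosSemidef) :
    psdSqrt M = CFC.sqrt M := by
  rw [CFC.sqrt_eq_real_sqrt M h.nonneg, cfcₙ_eq_cfc (hf0 := Real.sqrt_zero), h.1.cfc_eq,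
    Matrix.IsHermitian.cfc, Unitary.conjStarAlgAut_apply]
  unfold psdSqrt
  rw [dif_pos h]
  rfl

open scoped MatrixOrder in
lemma psdSqrt_posSemidef {d : ℕ} {M : Matrix (Fin d) (Fin d) ℂ} (h : M.PosSemidef) :
    (psdSqrt M).PosSemidef := by rw [psdSqrt_of_posSemidef h]; exact (CFC.sqrt_nonneg M).posSemidef

open scoped MatrixOrder in
lemma psdSqrt_mul_self {d : ℕ} {M : Matrix (Fin d) (Fin d) ℂ} (h : M.PosSemidef) :
    psdSqrt M * psdSqrt M = M := by rw [psdSqrt_of_posSemidef h]; exact CFC.sqrt_mul_sqrt_self M h.nonneg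

open scoped MatrixOrder in
lemma psdSqrt_unique {d : ℕ} {M R : Matrix (Fin d) (Fin d) ℂ} (hR : R.PosSemidef)
    (hRM : R * R = M) : psdSqrt M = R := by
  have hM : M.PosSemidef := by
    rw [← hRM]; nth_rewrite 1 [← hR.1.eq]; exact Matrix.posSemidef_conjTranspose_mul_self R
  rw [psdSqrt_of_posSemidef hM]
  exact CFC.sqrt_unique hRM hR.nonneg

lemma psdSqrt_hermitian {d : ℕ} {M : Matrix (Fin d) (Fin d) ℂ} (h : M.PosSemidef) :
    (psdSqrt M)ᴴ = psdSqrt M := (psdSqrt_posSemidef h).1.eq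

lemma trace_conjTranspose_mul_self_eq_zero {d : ℕ} {X : Matrix (Fin d) (Fin d) ℂ}
    (h : (Xᴴ * X).trace = 0) : X = 0 := by
  have h2 : ∑ j, ∑ k, (Complex.normSq (X k j) : ℂ) = 0 := by
    rw [← h, Matrix.trace]
    simp only [Matrix.diag_apply, Matrix.mul_apply, Matrix.conjTranspose_apply]
    refine (Finset.sum_congr rfl fun j _ => Finset.sum_congr rfl fun k _ => ?_).symm
    rw [RCLike.star_def, ← Complex.normSq_eq_conj_mul_self]
  have h3 : ∑ j, ∑ k, Complex.normSq (X k j) = 0 := by exact_mod_cast h2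
  ext k j
  have := (Finset.sum_eq_zero_iff_of_nonneg (fun j _ =>
    Finset.sum_nonneg fun k _ => Complex.normSq_nonneg _)).mp h3 j (Finset.mem_univ j)
  have := (Finset.sum_eq_zero_iff_of_nonneg (fun k _ => Complex.normSq_nonneg _)).mp
    this k (Finset.mem_univ k)
  simpa [Complex.normSq_eq_zero] using this


lemma exists_polar {d : ℕ} (C : Matrix (Fin d) (Fin d) ℂ) :
    ∃ W : Matrix (Fin d) (Fin d) ℂ, Wᴴ * W = 1 ∧ W * Wᴴ = 1 ∧ C = W * psdSqrt (Cᴴ * C) := by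
  have hP : (Cᴴ * C).PosSemidef := Matrix.posSemidef_conjTranspose_mul_self C
  set S := psdSqrt (Cᴴ * C) with hSdef
  have hS : S.PosSemidef := psdSqrt_posSemidef hP
  have hSS : S * S = Cᴴ * C := psdSqrt_mul_self hP
  have key : ∀ v : Fin d → ℂ, star (C *ᵥ v) ⬝ᵥ (C *ᵥ v) = star (S *ᵥ v) ⬝ᵥ (S *ᵥ v) := by
    intro v
    rw [star_mulVec, star_mulVec, ← Matrix.dotProduct_mulVec, ← Matrix.dotProduct_mulVec,
      Matrix.mulVec_mulVec, Matrix.mulVec_mulVec, hS.1.eq, hSS]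
  set f : EuclideanSpace ℂ (Fin d) →ₗ[ℂ] EuclideanSpace ℂ (Fin d) := Matrix.toEuclideanLin S
    with hfdef
  set g : EuclideanSpace ℂ (Fin d) →ₗ[ℂ] EuclideanSpace ℂ (Fin d) := Matrix.toEuclideanLin C
    with hgdef
  have hfg : ∀ x : EuclideanSpace ℂ (Fin d), ‖g x‖ = ‖f x‖ := by
    intro x
    have h1 : (⟪g x, g x⟫_ℂ) = ⟪f x, f x⟫_ℂ := by
      rw [hfdef, hgdef, Matrix.toEuclideanLin_apply, Matrix.toEuclideanLin_apply,
        EuclideanSpace.inner_toLp_toLp, EuclideanSpace.inner_toLp_toLp, dotProduct_comm,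
        key (WithLp.ofLp x)]
      exact dotProduct_comm _ _
    rw [inner_self_eq_norm_sq_to_K, inner_self_eq_norm_sq_to_K] at h1
    have h2 : ‖g x‖ ^ 2 = ‖f x‖ ^ 2 := by exact_mod_cast h1
    exact (sq_eq_sq₀ (norm_nonneg _) (norm_nonneg _)).mp h2
  have hker : LinearMap.ker f ≤ LinearMap.ker g := by
    intro x hx
    rw [LinearMap.mem_ker] at hx ⊢
    have := hfg x
    rw [hx, norm_zero] at this
    exact norm_eq_zero.mp this
  set L : ↥(LinearMap.range f) →ₗ[ℂ] EuclideanSpace ℂ (Fin d) :=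
    ((LinearMap.ker f).liftQ g hker).comp
      (f.quotKerEquivRange.symm : _ →ₗ[ℂ] _) with hLdef
  have hL : ∀ x : EuclideanSpace ℂ (Fin d),
      L ⟨f x, LinearMap.mem_range_self f x⟩ = g x := by
    intro x
    rw [hLdef, LinearMap.comp_apply]
    rw [LinearEquiv.coe_coe, f.quotKerEquivRange_symm_apply_image x]
    exact Submodule.liftQ_apply _ g x
  have hLnorm : ∀ s : ↥(LinearMap.range f), ‖L s‖ = ‖s‖ := by
    rintro ⟨-, x, rfl⟩
    rw [hL x]
    exact hfg x
  set Li : ↥(LinearMap.range f) →ₗᵢ[ℂ] EuclideanSpace ℂ (Fin d) := ⟨L, hLnorm⟩ with hLidef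
  set φ := Li.extend with hφdef
  have hφf : ∀ x : EuclideanSpace ℂ (Fin d), φ (f x) = g x := by
    intro x
    have h1 := Li.extend_apply ⟨f x, LinearMap.mem_range_self f x⟩
    rw [hφdef]
    exact h1.trans (hL x)
  set W : Matrix (Fin d) (Fin d) ℂ :=
    Matrix.toEuclideanLin.symm (φ.toLinearMap) with hWdef
  have hW : Matrix.toEuclideanLin W = φ.toLinearMap := by
    rw [hWdef]; exact LinearEquiv.apply_symm_apply _ _
  have hWv : ∀ v, Matrix.toEuclideanLin W v = φ v := fun v => by rw [hW]; rfl
  have claim : ∀ v w : Fin d → ℂ, star (W *ᵥ v) ⬝ᵥ (W *ᵥ w) = star v ⬝ᵥ w := by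
    intro v w
    have h1 := φ.inner_map_map ((WithLp.equiv 2 (Fin d → ℂ)).symm v)
      ((WithLp.equiv 2 (Fin d → ℂ)).symm w)
    rw [← hWv, ← hWv] at h1
    rw [dotProduct_comm (star (W *ᵥ v)), dotProduct_comm (star v)]
    simpa [Matrix.toEuclideanLin_apply_piLp_toLp,
      EuclideanSpace.inner_toLp_toLp] using h1
  have hWu1 : Wᴴ * W = 1 := by
    ext i j
    have h1 := claim (Pi.single i 1) (Pi.single j 1)
    simp only [Matrix.mulVec_single_one, mul_one] at h1
    simp only [Matrix.mul_apply, Matrix.conjTranspose_apply, Matrix.one_apply]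
    calc ∑ k, star (W k i) * W k j = star (fun k => W k i) ⬝ᵥ (fun k => W k j) := rfl
    _ = star (Pi.single i 1) ⬝ᵥ Pi.single j (1:ℂ) := h1
    _ = if i = j then 1 else 0 := by
        simp [dotProduct, Pi.single_apply, apply_ite, eq_comm]
  refine ⟨W, hWu1, mul_eq_one_comm.mp hWu1, ?_⟩
  have hCS : ∀ v : Fin d → ℂ, C *ᵥ v = (W * S) *ᵥ v := by
    intro v
    have h1 := hφf ((WithLp.equiv 2 (Fin d → ℂ)).symm v)
    rw [← hWv] at h1
    have h2 := congrArg (WithLp.equiv 2 (Fin d → ℂ)) h1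
    rw [hfdef, hgdef] at h2
    simpa [Matrix.toEuclideanLin_apply_piLp_toLp, Matrix.mulVec_mulVec] using h2.symm
  ext i j
  have := congrFun (hCS (Pi.single j 1)) i
  simpa [Matrix.mulVec_single] using this


lemma fidelity_eq_one_iff {d : ℕ} {U ρ : Matrix (Fin d) (Fin d) ℂ}
    (hU1 : Uᴴ * U = 1) (hU2 : U * Uᴴ = 1) (hρ : ρ.PosSemidef) (htr : ρ.trace = 1) :
    (psdSqrt (psdSqrt ρ * (U * ρ * Uᴴ) * psdSqrt ρ)).trace = 1 ↔ U * ρ * Uᴴ = ρ := by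
  set s := psdSqrt ρ with hsdef
  have hs : s.PosSemidef := psdSqrt_posSemidef hρ
  have hss : s * s = ρ := psdSqrt_mul_self hρ
  have hsH : sᴴ = s := hs.1.eq
  constructor
  · intro h1
    have hC0 : (s * Uᴴ * s)ᴴ * (s * Uᴴ * s) = s * (U * ρ * Uᴴ) * s := by
      simp only [Matrix.conjTranspose_mul, hsH, Matrix.conjTranspose_conjTranspose]
      rw [← hss]; noncomm_ring
    obtain ⟨W, hW1, hW2, hWC⟩ := exists_polar (s * Uᴴ * s)
    rw [hC0] at hWC
    have htrS : (Wᴴ * (s * Uᴴ * s)).trace = 1 := by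
      rw [hWC, ← Matrix.mul_assoc, hW1, Matrix.one_mul]; exact h1
    set Am := s * W with hAm
    set Bm := Uᴴ * s with hBm
    have tAB : (Amᴴ * Bm).trace = 1 := by
      rw [hAm, hBm, Matrix.conjTranspose_mul, hsH]
      rw [show Wᴴ * s * (Uᴴ * s) = Wᴴ * (s * Uᴴ * s) by noncomm_ring]
      exact htrS
    have tAA : (Amᴴ * Am).trace = 1 := by
      rw [hAm, Matrix.conjTranspose_mul, hsH,
        show Wᴴ * s * (s * W) = Wᴴ * ρ * W by rw [← hss]; noncomm_ring,
        Matrix.trace_mul_cycle, hW2, Matrix.one_mul]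
      exact htr
    have tBB : (Bmᴴ * Bm).trace = 1 := by
      rw [hBm, Matrix.conjTranspose_mul, Matrix.conjTranspose_conjTranspose, hsH,
        show s * U * (Uᴴ * s) = s * (U * Uᴴ) * s by noncomm_ring, hU2,
        Matrix.mul_one, hss]
      exact htr
    have tBA : (Bmᴴ * Am).trace = 1 := by
      have : (Amᴴ * Bm)ᴴ = Bmᴴ * Am := by
        rw [Matrix.conjTranspose_mul, Matrix.conjTranspose_conjTranspose]
      rw [← this, Matrix.trace_conjTranspose, tAB]; simp
    have hz : ((Am - Bm)ᴴ * (Am - Bm)).trace = 0 := by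
      rw [Matrix.conjTranspose_sub, Matrix.sub_mul, Matrix.mul_sub, Matrix.mul_sub]
      rw [Matrix.trace_sub, Matrix.trace_sub, Matrix.trace_sub, tAA, tAB, tBA, tBB]
      ring
    have hAB : Am = Bm := sub_eq_zero.mp (trace_conjTranspose_mul_self_eq_zero hz)
    have hAB' : s * W = Uᴴ * s := hAB
    have h5 : Uᴴ * ρ * U = ρ := by
      calc Uᴴ * ρ * U = (Uᴴ * s) * (Uᴴ * s)ᴴ := by
            rw [Matrix.conjTranspose_mul, hsH, Matrix.conjTranspose_conjTranspose, ← hss]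
            noncomm_ring
      _ = (s * W) * (s * W)ᴴ := by rw [hAB']
      _ = s * (W * Wᴴ) * s := by
            rw [Matrix.conjTranspose_mul, hsH]; noncomm_ring
      _ = ρ := by rw [hW2, Matrix.mul_one, hss]
    calc U * ρ * Uᴴ = U * (Uᴴ * ρ * U) * Uᴴ := by rw [h5]
    _ = (U * Uᴴ) * ρ * (U * Uᴴ) := by noncomm_ring
    _ = ρ := by rw [hU2, Matrix.one_mul, Matrix.mul_one]
  · intro h
    rw [h, show s * ρ * s = ρ * ρ by rw [← hss]; noncomm_ring, psdSqrt_unique hρ rfl]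
    exact htr


def outerm {d : ℕ} (x : Fin d → ℂ) : Matrix (Fin d) (Fin d) ℂ := Matrix.vecMulVec x (star x)

lemma outerm_mulVec {d : ℕ} (x v : Fin d → ℂ) : outerm x *ᵥ v = (star x ⬝ᵥ v) • x := by
  funext k
  simp only [outerm, Matrix.mulVec, dotProduct, Matrix.vecMulVec_apply, Pi.smul_apply,
    Pi.star_apply, smul_eq_mul]
  rw [Finset.sum_mul]
  exact Finset.sum_congr rfl fun l _ => by ring

lemma outerm_hermitian {d : ℕ} (x : Fin d → ℂ) : (outerm x)ᴴ = outerm x := by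
  ext i j
  simp only [outerm, Matrix.conjTranspose_apply, Matrix.vecMulVec_apply, Pi.star_apply,
    star_mul', star_star]
  exact mul_comm _ _

lemma outerm_psd {d : ℕ} (x : Fin d → ℂ) : (outerm x).PosSemidef := by
  refine Matrix.PosSemidef.of_dotProduct_mulVec_nonneg (outerm_hermitian x) ?_
  intro v
  rw [outerm_mulVec, dotProduct_smul]
  have h1 : star v ⬝ᵥ x = star (star x ⬝ᵥ v) := Matrix.star_dotProduct _ _
  rw [smul_eq_mul, h1, mul_comm]
  exact star_mul_self_nonneg _

lemma outerm_trace {d : ℕ} (x : Fin d → ℂ) : (outerm x).trace = star x ⬝ᵥ x := by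
  simp only [Matrix.trace, Matrix.diag_apply, outerm, Matrix.vecMulVec_apply, Pi.star_apply,
    dotProduct]
  exact Finset.sum_congr rfl fun i _ => mul_comm _ _

lemma outerm_mul_outerm {d : ℕ} (x : Fin d → ℂ) :
    outerm x * outerm x = (star x ⬝ᵥ x) • outerm x := by
  ext i j
  simp only [Matrix.mul_apply, outerm, Matrix.vecMulVec_apply, Pi.star_apply, Matrix.smul_apply,
    dotProduct, smul_eq_mul, Finset.sum_mul, Finset.mul_sum]
  exact Finset.sum_congr rfl fun k _ => by ring

lemma outerm_sandwich {d : ℕ} (x : Fin d → ℂ) (M : Matrix (Fin d) (Fin d) ℂ) :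
    outerm x * M * outerm x = (star x ⬝ᵥ (M *ᵥ x)) • outerm x := by
  ext i j
  simp only [Matrix.mul_apply, outerm, Matrix.vecMulVec_apply, Pi.star_apply, Matrix.smul_apply,
    dotProduct, Matrix.mulVec, smul_eq_mul, Finset.sum_mul, Finset.mul_sum]
  rw [Finset.sum_comm]
  exact Finset.sum_congr rfl fun l _ => Finset.sum_congr rfl fun k _ => by ring

lemma conj_outerm {d : ℕ} (x : Fin d → ℂ) (N : Matrix (Fin d) (Fin d) ℂ) :
    N * outerm x * Nᴴ = outerm (N *ᵥ x) := by
  ext i j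
  have h1 : ∀ l, (N * outerm x) i l = (N *ᵥ x) i * star (x l) := by
    intro l
    simp only [Matrix.mul_apply, outerm, Matrix.vecMulVec_apply, Pi.star_apply,
      Matrix.mulVec, dotProduct, Finset.sum_mul]
    exact Finset.sum_congr rfl fun k _ => by ring
  calc (N * outerm x * Nᴴ) i j = ∑ l, ((N *ᵥ x) i * star (x l)) * star (N j l) := by
        rw [Matrix.mul_apply]
        exact Finset.sum_congr rfl fun l _ => by rw [Matrix.conjTranspose_apply, h1]
  _ = (N *ᵥ x) i * star ((N *ᵥ x) j) := by
        rw [show ((N *ᵥ x) j) = ∑ l, N j l * x l from rfl, star_sum, Finset.mul_sum]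
        exact Finset.sum_congr rfl fun l _ => by rw [star_mul']; ring
  _ = outerm (N *ᵥ x) i j := rfl

lemma smul_psd {d : ℕ} {M : Matrix (Fin d) (Fin d) ℂ} (r : ℝ) (hr : 0 ≤ r)
    (hM : M.PosSemidef) : ((r : ℂ) • M).PosSemidef := by
  refine Matrix.PosSemidef.of_dotProduct_mulVec_nonneg ?_ ?_
  · show _ = _
    rw [Matrix.conjTranspose_smul, hM.1.eq, RCLike.star_def, Complex.conj_ofReal]
  · intro v
    rw [Matrix.smul_mulVec, dotProduct_smul, smul_eq_mul]
    exact mul_nonneg (by exact_mod_cast Complex.zero_le_real.mpr hr) (hM.dotProduct_mulVec_nonneg v)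


lemma trace_psdSqrt_outerm {d : ℕ} (U : Matrix (Fin d) (Fin d) ℂ) (x : Fin d → ℂ)
    (hx : star x ⬝ᵥ x = 1) :
    (psdSqrt (psdSqrt (outerm x) * (U * outerm x * Uᴴ) * psdSqrt (outerm x))).trace
      = ((‖star x ⬝ᵥ (U *ᵥ x)‖ : ℝ) : ℂ) := by
  have hpsd := outerm_psd x
  have h1 : psdSqrt (outerm x) = outerm x :=
    psdSqrt_unique hpsd (by rw [outerm_mul_outerm, hx, one_smul])
  rw [h1, conj_outerm]
  set c := star x ⬝ᵥ (U *ᵥ x) with hc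
  have h2 : star (U *ᵥ x) ⬝ᵥ x = star c := by
    rw [hc, Matrix.star_dotProduct (U *ᵥ x) x]
  have h3 : outerm x * outerm (U *ᵥ x) * outerm x = ((Complex.normSq c : ℝ) : ℂ) • outerm x := by
    rw [outerm_sandwich]
    congr 1
    rw [outerm_mulVec, dotProduct_smul, smul_eq_mul, h2, ← hc,
      Complex.normSq_eq_conj_mul_self, RCLike.star_def]
  rw [h3]
  have h4 : psdSqrt (((Complex.normSq c : ℝ) : ℂ) • outerm x)
      = ((‖c‖ : ℝ) : ℂ) • outerm x := by
    refine psdSqrt_unique (smul_psd _ (norm_nonneg c) hpsd) ?_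
    rw [smul_mul_smul_comm, outerm_mul_outerm, hx, one_smul, ← Complex.ofReal_mul,
      ← sq, Complex.sq_norm]
  rw [h4, Matrix.trace_smul, outerm_trace, hx, smul_eq_mul, mul_one]


lemma unitary_dot {d : ℕ} {W : Matrix (Fin d) (Fin d) ℂ} (hW : Wᴴ * W = 1)
    (v w : Fin d → ℂ) : star (W *ᵥ v) ⬝ᵥ (W *ᵥ w) = star v ⬝ᵥ w := by
  rw [star_mulVec, ← Matrix.dotProduct_mulVec, Matrix.mulVec_mulVec, hW, Matrix.one_mulVec]

section basis

variable {d : ℕ} (H : Matrix (Fin d) (Fin d) ℂ) (ψ : Fin d → Fin d → ℂ) (E : Fin d → ℝ) (θ : ℝ)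

lemma basis_unitary (horth : ∀ i j : Fin d, star (ψ i) ⬝ᵥ ψ j = if i = j then 1 else 0) :
    (Matrix.of fun k i => ψ i k)ᴴ * (Matrix.of fun k i => ψ i k) = 1 := by
  ext i j
  simp only [Matrix.mul_apply, Matrix.conjTranspose_apply, Matrix.of_apply, Matrix.one_apply]
  rw [← horth i j]
  rfl

lemma Uevol_eq (horth : ∀ i j : Fin d, star (ψ i) ⬝ᵥ ψ j = if i = j then 1 else 0)
    (heig : ∀ i : Fin d, H *ᵥ ψ i = (E i : ℂ) • ψ i) :
    Uevol H θ = (Matrix.of fun k i => ψ i k) *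
      Matrix.diagonal (fun i => Complex.exp (-(Complex.I * θ) * E i)) *
      (Matrix.of fun k i => ψ i k)ᴴ := by
  set Ψ : Matrix (Fin d) (Fin d) ℂ := Matrix.of fun k i => ψ i k with hΨdef
  have hΨ1 : Ψᴴ * Ψ = 1 := basis_unitary ψ horth
  have hΨ2 : Ψ * Ψᴴ = 1 := mul_eq_one_comm.mp hΨ1
  have hHΨ : H * Ψ = Ψ * Matrix.diagonal (fun i => (E i : ℂ)) := by
    ext k i
    have h1 : (H * Ψ) k i = (H *ᵥ ψ i) k := by
      simp only [Matrix.mul_apply, Matrix.mulVec, dotProduct, hΨdef, Matrix.of_apply]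
    rw [h1, heig i, Matrix.mul_diagonal]
    simp only [Pi.smul_apply, smul_eq_mul, hΨdef, Matrix.of_apply]
    ring
  have hH : H = Ψ * Matrix.diagonal (fun i => (E i : ℂ)) * Ψᴴ := by
    calc H = H * (Ψ * Ψᴴ) := by rw [hΨ2, Matrix.mul_one]
    _ = (H * Ψ) * Ψᴴ := by rw [Matrix.mul_assoc]
    _ = Ψ * Matrix.diagonal (fun i => (E i : ℂ)) * Ψᴴ := by rw [hHΨ]
  have hinv : Ψ⁻¹ = Ψᴴ := Matrix.inv_eq_right_inv hΨ2
  have hunit : IsUnit Ψ := ⟨⟨Ψ, Ψᴴ, hΨ2, hΨ1⟩, rfl⟩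
  rw [Uevol, hH, ← Matrix.smul_mul, ← Matrix.mul_smul, ← Matrix.diagonal_smul, ← hinv,
    Matrix.exp_conj Ψ _ hunit, Matrix.exp_diagonal, hinv]
  congr 2
  rw [Pi.exp_def]
  funext i
  rw [← Complex.exp_eq_exp_ℂ]
  simp only [Pi.smul_apply, smul_eq_mul]

lemma unitmu (i : Fin d) : ‖Complex.exp (-(Complex.I * θ) * E i)‖ = 1 := by
  rw [Complex.norm_exp]
  have : (-(Complex.I * θ) * E i).re = 0 := by simp
  rw [this, Real.exp_zero]

end basis

lemma unit_complex_re_one {z : ℂ} (h1 : ‖z‖ = 1) (h2 : z.re = 1) : z = 1 := by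
  have h3 : Complex.normSq z = 1 := by rw [← Complex.sq_norm, h1]; norm_num
  rw [Complex.normSq_apply, h2] at h3
  have h4 : z.im = 0 := by nlinarith
  exact Complex.ext h2 h4

lemma sandwich_mul {d : ℕ} {Ψ : Matrix (Fin d) (Fin d) ℂ} (hΨ1 : Ψᴴ * Ψ = 1)
    (X Y : Matrix (Fin d) (Fin d) ℂ) :
    (Ψ * X * Ψᴴ) * (Ψ * Y * Ψᴴ) = Ψ * (X * Y) * Ψᴴ := by
  have h : (Ψ * X * Ψᴴ) * (Ψ * Y * Ψᴴ) = Ψ * (X * ((Ψᴴ * Ψ) * Y)) * Ψᴴ := by noncomm_ring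
  rw [h, hΨ1, Matrix.one_mul]

lemma sandwich_unitary {d : ℕ} {Ψ U : Matrix (Fin d) (Fin d) ℂ} {μ : Fin d → ℂ}
    (hΨ1 : Ψᴴ * Ψ = 1) (hΨ2 : Ψ * Ψᴴ = 1) (hU : U = Ψ * Matrix.diagonal μ * Ψᴴ)
    (hμ : ∀ i, ‖μ i‖ = 1) : Uᴴ * U = 1 ∧ U * Uᴴ = 1 := by
  have hμ1 : ∀ i : Fin d, star (μ i) * μ i = 1 := by
    intro i
    rw [RCLike.star_def, ← Complex.normSq_eq_conj_mul_self, ← Complex.sq_norm, hμ]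
    norm_num
  have hμ2 : ∀ i : Fin d, μ i * star (μ i) = 1 := fun i => by rw [mul_comm]; exact hμ1 i
  have hUH : Uᴴ = Ψ * Matrix.diagonal (star μ) * Ψᴴ := by
    rw [hU]
    simp only [Matrix.conjTranspose_mul, Matrix.conjTranspose_conjTranspose,
      Matrix.diagonal_conjTranspose]
    noncomm_ring
  constructor
  · rw [hUH, hU, sandwich_mul hΨ1, Matrix.diagonal_mul_diagonal,
      show (fun i => star μ i * μ i) = (fun _ => (1:ℂ)) from funext fun i => hμ1 i,
      Matrix.diagonal_one, Matrix.mul_one, hΨ2]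
  · rw [hUH, hU, sandwich_mul hΨ1, Matrix.diagonal_mul_diagonal,
      show (fun i => μ i * star μ i) = (fun _ => (1:ℂ)) from funext fun i => hμ2 i,
      Matrix.diagonal_one, Matrix.mul_one, hΨ2]

lemma free_iff_eigen {d : ℕ} {Ψ U : Matrix (Fin d) (Fin d) ℂ} {μ : Fin d → ℂ}
    (hΨ1 : Ψᴴ * Ψ = 1) (hΨ2 : Ψ * Ψᴴ = 1) (hU : U = Ψ * Matrix.diagonal μ * Ψᴴ)
    (hμ : ∀ i, ‖μ i‖ = 1) (x : Fin d → ℂ) (hx : star x ⬝ᵥ x = 1) :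
    ‖star x ⬝ᵥ (U *ᵥ x)‖ = 1 ↔ ∃ ν : ℂ, U *ᵥ x = ν • x := by
  obtain ⟨hU1, hU2⟩ := sandwich_unitary hΨ1 hΨ2 hU hμ
  set y := Ψᴴ *ᵥ x with hydef
  have hxy : Ψ *ᵥ y = x := by rw [hydef, Matrix.mulVec_mulVec, hΨ2, Matrix.one_mulVec]
  have hUx : U *ᵥ x = Ψ *ᵥ (Matrix.diagonal μ *ᵥ y) := by
    rw [hU, hydef, Matrix.mulVec_mulVec, Matrix.mulVec_mulVec]
  have hdot : star x ⬝ᵥ (U *ᵥ x) = star y ⬝ᵥ (Matrix.diagonal μ *ᵥ y) := by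
    conv_lhs => rw [hUx, ← hxy]
    exact unitary_dot hΨ1 y (Matrix.diagonal μ *ᵥ y)
  have hy1 : star y ⬝ᵥ y = 1 := by
    have h := unitary_dot hΨ1 y y
    rw [hxy] at h
    rw [← h, hx]
  have hnorm1 : ∑ i, Complex.normSq (y i) = 1 := by
    have h1 : star y ⬝ᵥ y = ((∑ i, Complex.normSq (y i) : ℝ) : ℂ) := by
      push_cast
      refine Finset.sum_congr rfl fun i _ => ?_
      rw [Complex.normSq_eq_conj_mul_self]
      rfl
    rw [hy1] at h1
    exact_mod_cast h1.symm
  constructor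
  · intro habs
    set ν := star y ⬝ᵥ (Matrix.diagonal μ *ᵥ y) with hν
    have habsν : ‖ν‖ = 1 := by rw [← hdot]; exact habs
    have hsum : ν = ∑ i, (Complex.normSq (y i) : ℂ) * μ i := by
      rw [hν]
      simp only [dotProduct, Matrix.mulVec_diagonal, Pi.star_apply]
      refine Finset.sum_congr rfl fun i _ => ?_
      rw [RCLike.star_def, show ((Complex.normSq (y i) : ℂ)) = (starRingEnd ℂ) (y i) * y i
        from Complex.normSq_eq_conj_mul_self]
      ring
    have h2 : (starRingEnd ℂ) ν * ν = 1 := by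
      rw [← Complex.normSq_eq_conj_mul_self, ← Complex.sq_norm, habsν]
      norm_num
    have hre : ∑ i, Complex.normSq (y i) * ((starRingEnd ℂ) ν * μ i).re = 1 := by
      have h2' : ν * (starRingEnd ℂ) ν = 1 := by rw [mul_comm]; exact h2
      have h3 : ν * (starRingEnd ℂ) ν = ∑ i, (Complex.normSq (y i) : ℂ) *
          ((starRingEnd ℂ) ν * μ i) := by
        nth_rewrite 1 [hsum]
        rw [Finset.sum_mul]
        exact Finset.sum_congr rfl fun i _ => by ring
      have h4 := congrArg Complex.re (h2'.symm.trans h3)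
      rw [Complex.re_sum] at h4
      have h5 : ∑ i, Complex.normSq (y i) * ((starRingEnd ℂ) ν * μ i).re
          = ∑ i, ((Complex.normSq (y i) : ℂ) * ((starRingEnd ℂ) ν * μ i)).re :=
        Finset.sum_congr rfl fun i _ => (Complex.re_ofReal_mul _ _).symm
      rw [h5, ← h4, Complex.one_re]
    have hterm : ∀ i, ((starRingEnd ℂ) ν * μ i).re ≤ 1 := by
      intro i
      have := Complex.re_le_norm ((starRingEnd ℂ) ν * μ i)
      rwa [norm_mul, Complex.norm_conj, habsν, hμ i, one_mul] at this
    have hzero : ∀ i ∈ Finset.univ, Complex.normSq (y i) *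
        (1 - ((starRingEnd ℂ) ν * μ i).re) = 0 := by
      apply (Finset.sum_eq_zero_iff_of_nonneg ?_).mp
      · rw [Finset.sum_congr rfl (fun i _ => mul_sub (Complex.normSq (y i)) 1 _),
          Finset.sum_sub_distrib]
        simp only [mul_one]
        rw [hnorm1, hre, sub_self]
      · exact fun i _ => mul_nonneg (Complex.normSq_nonneg _)
          (sub_nonneg.mpr (hterm i))
    have key : ∀ i, y i ≠ 0 → μ i = ν := by
      intro i hyi
      have h5 := hzero i (Finset.mem_univ i)
      have h6 : (1 - ((starRingEnd ℂ) ν * μ i).re) = 0 := by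
        rcases mul_eq_zero.mp h5 with h | h
        · exact absurd h (by simpa [Complex.normSq_eq_zero] using hyi)
        · exact h
      have h7 : ((starRingEnd ℂ) ν * μ i).re = 1 := by linarith
      have habs7 : ‖(starRingEnd ℂ) ν * μ i‖ = 1 := by
        rw [norm_mul, Complex.norm_conj, habsν, hμ i, one_mul]
      have h8 : (starRingEnd ℂ) ν * μ i = 1 := unit_complex_re_one habs7 h7
      calc μ i = (ν * (starRingEnd ℂ) ν) * μ i := by rw [mul_comm ν _, h2, one_mul]
      _ = ν * ((starRingEnd ℂ) ν * μ i) := by ring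
      _ = ν := by rw [h8, mul_one]
    refine ⟨ν, ?_⟩
    have hDy : Matrix.diagonal μ *ᵥ y = ν • y := by
      funext i
      rw [Matrix.mulVec_diagonal]
      by_cases hyi : y i = 0
      · simp [hyi]
      · rw [key i hyi]; rfl
    rw [hUx, hDy, Matrix.mulVec_smul, hxy]
  · rintro ⟨ν, hν⟩
    have h1 : star x ⬝ᵥ (U *ᵥ x) = ν := by
      rw [hν, dotProduct_smul, smul_eq_mul, hx, mul_one]
    have h2 : Complex.normSq ν = 1 := by
      have h3 := unitary_dot hU1 x x
      rw [hν] at h3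
      rw [hx] at h3
      have h4 : star (ν • x) ⬝ᵥ (ν • x) = (starRingEnd ℂ) ν * ν := by
        rw [star_smul, smul_dotProduct, dotProduct_smul, hx]
        simp [RCLike.star_def, mul_assoc]
      rw [h4] at h3
      have := h3.trans rfl
      rw [← Complex.normSq_eq_conj_mul_self] at this
      exact_mod_cast this
    rw [h1]
    have h6 : ‖ν‖ ^ 2 = 1 := by rw [Complex.sq_norm]; exact h2
    nlinarith [norm_nonneg ν]


end AuxLemmas

theorem free_unitaries_are_exactly_density_matrix_preserving
    (d : ℕ) (hd : 2 ≤ d)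
    (H : Matrix (Fin d) (Fin d) ℂ) (hH : H.IsHermitian)
    (ψ : Fin d → Fin d → ℂ) (E : Fin d → ℝ)
    (horth : ∀ i j : Fin d, star (ψ i) ⬝ᵥ ψ j = if i = j then 1 else 0)
    (heig : ∀ i : Fin d, H *ᵥ ψ i = (E i : ℂ) • ψ i)
    (T : ℕ) (hT : 0 < T)
    (A B : Finset (Fin d))
    (hdisj : Disjoint A B) (hcover : A ∪ B = Finset.univ)
    (hArat : ∀ i ∈ A, ∃ m : ℤ, E i * (T : ℝ) = (m : ℝ))
    (hBirr : ∀ i ∈ B, Irrational (E i))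
    (hBdiff : ∀ i ∈ B, ∀ j ∈ B, i ≠ j → Irrational (E i - E j))
    (hAcard : 1 < A.card) (hBcard : 1 < B.card)
    (V : Matrix (Fin d) (Fin d) ℂ) (hV : V ∈ Matrix.unitaryGroup (Fin d) ℂ) :
    (∀ ρ : Matrix (Fin d) (Fin d) ℂ, IsFreeDM H T ρ → IsFreeDM H T (V * ρ * Vᴴ)) ↔
      IsFreeUnitary H T V := by
  have hV1 : Vᴴ * V = 1 := by
    have h := Matrix.mem_unitaryGroup_iff'.mp hV
    rwa [Matrix.star_eq_conjTranspose] at h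
  have hV2 : V * Vᴴ = 1 := mul_eq_one_comm.mp hV1
  set Ψ : Matrix (Fin d) (Fin d) ℂ := Matrix.of fun k i => ψ i k with hΨdef
  have hΨ1 : Ψᴴ * Ψ = 1 := basis_unitary ψ horth
  have hΨ2 : Ψ * Ψᴴ = 1 := mul_eq_one_comm.mp hΨ1
  set μ : Fin d → ℂ := fun i => Complex.exp (-(Complex.I * ((2 * Real.pi * (T : ℝ)) : ℝ)) * E i)
    with hμdef
  have hμabs : ∀ i, ‖μ i‖ = 1 := fun i => unitmu E (2 * Real.pi * (T : ℝ)) i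
  have hμstar : ∀ i, star (μ i) * μ i = 1 := by
    intro i
    rw [RCLike.star_def, ← Complex.normSq_eq_conj_mul_self, ← Complex.sq_norm, hμabs i]
    norm_num
  set U : Matrix (Fin d) (Fin d) ℂ := Uevol H (2 * Real.pi * (T : ℝ)) with hUdef
  have hUeq : U = Ψ * Matrix.diagonal μ * Ψᴴ := Uevol_eq H ψ E _ horth heig
  obtain ⟨hU1, hU2⟩ := sandwich_unitary hΨ1 hΨ2 hUeq hμabs
  have hUH : Uᴴ = Ψ * Matrix.diagonal (star μ) * Ψᴴ := by
    rw [hUeq]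
    simp only [Matrix.conjTranspose_mul, Matrix.conjTranspose_conjTranspose,
      Matrix.diagonal_conjTranspose]
    noncomm_ring
  have hFRdef : ∀ x : Fin d → ℂ, FR H T x = ‖star x ⬝ᵥ (U *ᵥ x)‖ := fun _ => rfl
  have hFRMdef : ∀ ρ' : Matrix (Fin d) (Fin d) ℂ, FRM H T ρ' =
      (psdSqrt (psdSqrt ρ' * (U * ρ' * Uᴴ) * psdSqrt ρ')).trace := fun _ => rfl
  constructor
  · -- density-matrix preserving implies free unitary
    intro hpres
    refine ⟨hV, ?_⟩
    intro x hx
    obtain ⟨hx1, hxFR⟩ := hx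
    have hDM : IsFreeDM H T (outerm x) := by
      refine ⟨outerm_psd x, by rw [outerm_trace, hx1], ?_⟩
      rw [hFRMdef, trace_psdSqrt_outerm U x hx1, ← hFRdef, hxFR]
      norm_num
    have h2 := hpres (outerm x) hDM
    rw [conj_outerm] at h2
    obtain ⟨-, -, hFRM2⟩ := h2
    have hVx1 : star (V *ᵥ x) ⬝ᵥ (V *ᵥ x) = 1 := by rw [unitary_dot hV1, hx1]
    refine ⟨hVx1, ?_⟩
    rw [hFRMdef, trace_psdSqrt_outerm U (V *ᵥ x) hVx1, ← hFRdef] at hFRM2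
    exact_mod_cast hFRM2
  · -- free unitary implies density-matrix preserving
    intro hfu ρ hρDM
    obtain ⟨hρ, hρtr, hρFRM⟩ := hρDM
    have hcomm : U * ρ * Uᴴ = ρ := by
      rw [hFRMdef] at hρFRM
      exact (fidelity_eq_one_iff hU1 hU2 hρ hρtr).mp hρFRM
    have claimA : ∀ x : Fin d → ℂ, x ≠ 0 → (∃ ν : ℂ, U *ᵥ x = ν • x) →
        ∃ ν' : ℂ, U *ᵥ (V *ᵥ x) = ν' • (V *ᵥ x) := by
      rintro x hx0 ⟨ν, hν⟩
      set n : ℝ := ∑ i, Complex.normSq (x i) with hn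
      have hn0 : 0 < n := by
        obtain ⟨i, hi⟩ : ∃ i, x i ≠ 0 := by
          by_contra hcon; push_neg at hcon; exact hx0 (funext hcon)
        exact Finset.sum_pos' (fun j _ => Complex.normSq_nonneg _)
          ⟨i, Finset.mem_univ i, Complex.normSq_pos.mpr hi⟩
      have hnx : star x ⬝ᵥ x = (n : ℂ) := by
        rw [hn]
        push_cast
        exact Finset.sum_congr rfl fun i _ => by
          rw [show ((Complex.normSq (x i) : ℂ)) = (starRingEnd ℂ) (x i) * x i
            from Complex.normSq_eq_conj_mul_self]
          rfl
      set r : ℝ := (Real.sqrt n)⁻¹ with hr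
      have hrpos : 0 < r := inv_pos.mpr (Real.sqrt_pos.mpr hn0)
      have hrc : (r : ℂ) ≠ 0 := by exact_mod_cast hrpos.ne'
      set x' : Fin d → ℂ := (r : ℂ) • x with hx'def
      have hx'1 : star x' ⬝ᵥ x' = 1 := by
        rw [hx'def, star_smul, smul_dotProduct, dotProduct_smul, hnx]
        rw [smul_eq_mul, smul_eq_mul, RCLike.star_def, Complex.conj_ofReal,
          ← Complex.ofReal_mul, ← Complex.ofReal_mul]
        norm_cast
        rw [hr]
        have hs : Real.sqrt n ≠ 0 := (Real.sqrt_pos.mpr hn0).ne'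
        field_simp
        rw [Real.sq_sqrt hn0.le]
      have hfs : IsFreeState H T x' := by
        refine ⟨hx'1, ?_⟩
        rw [hFRdef, free_iff_eigen hΨ1 hΨ2 hUeq hμabs x' hx'1]
        refine ⟨ν, ?_⟩
        rw [hx'def, Matrix.mulVec_smul, hν, smul_comm]
      obtain ⟨hVx'1, hVFR⟩ := hfu.2 x' hfs
      rw [hFRdef] at hVFR
      obtain ⟨ν', hν'⟩ := (free_iff_eigen hΨ1 hΨ2 hUeq hμabs (V *ᵥ x') hVx'1).mp hVFR
      refine ⟨ν', ?_⟩
      rw [hx'def] at hν'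
      simp only [Matrix.mulVec_smul] at hν'
      rw [smul_comm ν' ((r : ℂ))] at hν'
      exact smul_right_injective _ hrc hν'
    have hψcoord : ∀ i, Ψᴴ *ᵥ ψ i = Pi.single i 1 := by
      intro i
      funext j
      have h1 : (Ψᴴ *ᵥ ψ i) j = star (ψ j) ⬝ᵥ ψ i := by
        simp [Matrix.mulVec, dotProduct, Matrix.conjTranspose_apply, hΨdef]
      rw [h1, horth j i, Pi.single_apply]
    have hψeig : ∀ i, U *ᵥ ψ i = μ i • ψ i := by
      intro i
      rw [hUeq, ← Matrix.mulVec_mulVec, ← Matrix.mulVec_mulVec, hψcoord i,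
        Matrix.diagonal_mulVec_single, mul_one, Matrix.mulVec_single]
      funext k
      simp only [Pi.smul_apply, op_smul_eq_mul, Matrix.col_apply, smul_eq_mul, hΨdef, Matrix.of_apply]
      ring
    have hψne : ∀ i, ψ i ≠ 0 := by
      intro i hcon
      have h := horth i i
      rw [if_pos rfl, hcon] at h
      simp [dotProduct] at h
    choose α hα using fun i => claimA (ψ i) (hψne i) ⟨μ i, hψeig i⟩
    have hVψ1 : ∀ i j, star (V *ᵥ ψ i) ⬝ᵥ (V *ᵥ ψ j) = if i = j then 1 else 0 := by
      intro i j; rw [unitary_dot hV1, horth]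
    have hαstar : ∀ i, star (α i) * α i = 1 := by
      intro i
      have h1 : star (U *ᵥ (V *ᵥ ψ i)) ⬝ᵥ (U *ᵥ (V *ᵥ ψ i)) = 1 := by
        rw [unitary_dot hU1, hVψ1 i i, if_pos rfl]
      rw [hα i, star_smul, smul_dotProduct, dotProduct_smul, hVψ1 i i,
        if_pos rfl] at h1
      simpa using h1
    have hαeq : ∀ i j, μ i = μ j → α i = α j := by
      intro i j hμij
      by_cases hij : i = j
      · rw [hij]
      · have hsum_ne : ψ i + ψ j ≠ 0 := by
          intro hcon
          have h1 : star (ψ i) ⬝ᵥ (ψ i + ψ j) = 1 := by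
            rw [dotProduct_add, horth i i, horth i j, if_pos rfl, if_neg hij, add_zero]
          rw [hcon, dotProduct_zero] at h1
          exact zero_ne_one h1
        have heigsum : U *ᵥ (ψ i + ψ j) = μ i • (ψ i + ψ j) := by
          rw [Matrix.mulVec_add, hψeig i, hψeig j, ← hμij, smul_add]
        obtain ⟨γ, hγ⟩ := claimA (ψ i + ψ j) hsum_ne ⟨μ i, heigsum⟩
        rw [Matrix.mulVec_add, Matrix.mulVec_add, hα i, hα j, smul_add] at hγ
        have hji : ¬ j = i := fun h => hij h.symm
        have hi' : α i = γ := by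
          have h3 := congrArg (fun w => star (V *ᵥ ψ i) ⬝ᵥ w) hγ
          simpa [dotProduct_add, dotProduct_smul, hVψ1, hij] using h3
        have hj' : α j = γ := by
          have h3 := congrArg (fun w => star (V *ᵥ ψ j) ⬝ᵥ w) hγ
          simpa [dotProduct_add, dotProduct_smul, hVψ1, hji] using h3
        rw [hi', hj']
    set ρt : Matrix (Fin d) (Fin d) ℂ := Ψᴴ * ρ * Ψ with hρtdef
    have hρΨ : Ψ * ρt * Ψᴴ = ρ := by
      rw [hρtdef]
      calc Ψ * (Ψᴴ * ρ * Ψ) * Ψᴴ = (Ψ * Ψᴴ) * ρ * (Ψ * Ψᴴ) := by noncomm_ring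
      _ = ρ := by rw [hΨ2, Matrix.one_mul, Matrix.mul_one]
    have hsand : ∀ X Y : Matrix (Fin d) (Fin d) ℂ, Ψ * X * Ψᴴ = Ψ * Y * Ψᴴ → X = Y := by
      intro X Y hXY
      have h2 : ∀ Z : Matrix (Fin d) (Fin d) ℂ, Ψᴴ * (Ψ * Z * Ψᴴ) * Ψ = Z := by
        intro Z
        calc Ψᴴ * (Ψ * Z * Ψᴴ) * Ψ = (Ψᴴ * Ψ) * Z * (Ψᴴ * Ψ) := by noncomm_ring
        _ = Z := by rw [hΨ1, Matrix.one_mul, Matrix.mul_one]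
      rw [← h2 X, ← h2 Y, hXY]
    have hDρt : Matrix.diagonal μ * ρt * Matrix.diagonal (star μ) = ρt := by
      apply hsand
      have e1 : (Ψ * Matrix.diagonal μ * Ψᴴ) * (Ψ * ρt * Ψᴴ) *
          (Ψ * Matrix.diagonal (star μ) * Ψᴴ)
          = Ψ * (Matrix.diagonal μ * ρt * Matrix.diagonal (star μ)) * Ψᴴ := by
        rw [sandwich_mul hΨ1, sandwich_mul hΨ1]
      rw [← e1, ← hUeq, ← hUH, hρΨ, hcomm]
    have hρt_entry : ∀ i j, μ i * ρt i j * star (μ j) = ρt i j := by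
      intro i j
      have h1 := congrFun (congrFun hDρt i) j
      simpa [Matrix.diagonal_mul, Matrix.mul_diagonal] using h1
    have hUKey : U * (V * Ψ) = (V * Ψ) * Matrix.diagonal α := by
      ext k i
      have hcol : (fun l => (V * Ψ) l i) = V *ᵥ ψ i := by
        funext l
        simp [Matrix.mul_apply, Matrix.mulVec, dotProduct, hΨdef]
      have h1 : (U * (V * Ψ)) k i = (U *ᵥ (V *ᵥ ψ i)) k := by
        rw [← hcol]
        simp [Matrix.mul_apply, Matrix.mulVec, dotProduct]
      rw [h1, hα i, Matrix.mul_diagonal]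
      have h2 : (V *ᵥ ψ i) k = (V * Ψ) k i := by
        simp [Matrix.mul_apply, Matrix.mulVec, dotProduct, hΨdef]
      rw [Pi.smul_apply, h2, smul_eq_mul, mul_comm]
    have hAρt : Matrix.diagonal α * ρt * (Matrix.diagonal α)ᴴ = ρt := by
      rw [Matrix.diagonal_conjTranspose]
      ext i j
      rw [Matrix.mul_diagonal, Matrix.diagonal_mul]
      show α i * ρt i j * star (α j) = ρt i j
      by_cases h0 : ρt i j = 0
      · rw [h0]; ring
      · have hμij : μ i = μ j := by
          have h1 : μ i * star (μ j) * ρt i j = 1 * ρt i j := by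
            rw [one_mul]
            nth_rewrite 2 [← hρt_entry i j]
            ring
          have h2 : μ i * star (μ j) = 1 := mul_right_cancel₀ h0 h1
          calc μ i = μ i * (star (μ j) * μ j) := by rw [hμstar j, mul_one]
          _ = (μ i * star (μ j)) * μ j := by ring
          _ = μ j := by rw [h2, one_mul]
        rw [hαeq i j hμij]
        calc α j * ρt i j * star (α j) = (star (α j) * α j) * ρt i j := by ring
        _ = ρt i j := by rw [hαstar j, one_mul]
    have hgoal : U * (V * ρ * Vᴴ) * Uᴴ = V * ρ * Vᴴ := by
      calc U * (V * ρ * Vᴴ) * Uᴴ = (U * (V * Ψ)) * ρt * (U * (V * Ψ))ᴴ := by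
            rw [← hρΨ]
            simp only [Matrix.conjTranspose_mul]
            noncomm_ring
      _ = ((V * Ψ) * Matrix.diagonal α) * ρt * ((V * Ψ) * Matrix.diagonal α)ᴴ := by
            rw [hUKey]
      _ = (V * Ψ) * (Matrix.diagonal α * ρt * (Matrix.diagonal α)ᴴ) * (V * Ψ)ᴴ := by
            simp only [Matrix.conjTranspose_mul]
            noncomm_ring
      _ = (V * Ψ) * ρt * (V * Ψ)ᴴ := by rw [hAρt]
      _ = V * ρ * Vᴴ := by
            rw [← hρΨ]
            simp only [Matrix.conjTranspose_mul]
            noncomm_ring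
    have hσpsd : (V * ρ * Vᴴ).PosSemidef := hρ.mul_mul_conjTranspose_same V
    have hσtr : (V * ρ * Vᴴ).trace = 1 := by
      rw [Matrix.trace_mul_cycle, hV1, Matrix.one_mul, hρtr]
    refine ⟨hσpsd, hσtr, ?_⟩
    rw [hFRMdef]
    exact (fidelity_eq_one_iff hU1 hU2 hσpsd hσtr).mpr hgoal
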